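/- arXiv:1902.04539 — 4 statements merged into one kernel-verified Lean document; each statement's English description precedes it below -/
import Mathlib

section
/- Let b = (b_1,…,b_m) be a sequence of integers, each ≥ −1, with b_1+⋯+b_m = −ρ where ρ ≥ 1. For i ∈ {1,…,m}, let b^i be the i-th cyclic shift, b^i_j = b_{i+j mod m}. Let I = min_{1≤ℓ≤m}(b_1+⋯+b_ℓ). Then the following are equivalent: (1) b^i_1+⋯+b^i_k ≥ 1−ρ for every 1 ≤ k ≤ m−1; (2) there exists p ∈ {0,…,ρ−1} such that i = min{k ∈ {1,…,m} : b_1+⋯+b_k = I+p}. In particular there are exactly ρ indices i satisfying (1). -/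
open scoped Classical

open Finset in
private lemma cyclic_sum_shift (m : ℕ) (b : ℕ → ℤ) (i : ℕ) (hi1 : 1 ≤ i) (hi2 : i ≤ m) :
    ∀ k, k ≤ m → ∑ j ∈ range k, b ((i + j) % m) =
      if i + k ≤ m then (∑ j ∈ range (i + k), b j) - ∑ j ∈ range i, b j
      else ((∑ j ∈ range m, b j) - ∑ j ∈ range i, b j) + ∑ j ∈ range (i + k - m), b j := by
  intro k
  induction k with
  | zero => intro _; simp [hi2]
  | succ k ih =>
    intro hk
    rw [sum_range_succ, ih (by omega)]
    by_cases h1 : i + (k + 1) ≤ m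
    · have hik : i + k < m := by omega
      rw [if_pos (by omega : i + k ≤ m), if_pos h1, Nat.mod_eq_of_lt hik,
        show i + (k + 1) = (i + k) + 1 from by omega, sum_range_succ]
      ring
    · by_cases h2 : i + k ≤ m
      · have hik : i + k = m := by omega
        rw [if_pos h2, if_neg h1, hik, Nat.mod_self,
          show i + (k + 1) - m = 1 from by omega, sum_range_one]
      · have hlt : i + k - m < m := by omega
        have hmod : (i + k) % m = i + k - m := by
          rw [Nat.mod_eq_sub_mod (by omega), Nat.mod_eq_of_lt hlt]
        rw [if_neg h2, if_neg h1, hmod,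
          show i + (k + 1) - m = (i + k - m) + 1 from by omega, sum_range_succ]
        ring

private lemma cyclic_hit (m : ℕ) (b : ℕ → ℤ) (hb : ∀ j < m, -1 ≤ b j) (t : ℤ) (ht : t < 0) :
    ∀ n, n ≤ m → (∑ j ∈ Finset.range n, b j) ≤ t →
      ∃ k, 1 ≤ k ∧ k ≤ n ∧ (∑ j ∈ Finset.range k, b j) = t := by
  intro n
  induction n with
  | zero => intro _ h; simp only [Finset.sum_range_zero] at h; omega
  | succ n ih =>
    intro hn h
    by_cases hc : (∑ j ∈ Finset.range n, b j) ≤ t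
    · obtain ⟨k, h1, h2, h3⟩ := ih (by omega) hc
      exact ⟨k, h1, by omega, h3⟩
    · refine ⟨n + 1, by omega, le_refl _, ?_⟩
      have hbn := hb n (by omega)
      rw [Finset.sum_range_succ] at h ⊢
      omega

/-- The cyclic lemma (discrete Vervaat transform).  Let `b 0, …, b (m-1)` be integers, each
`≥ -1`, summing to `-ρ` with `ρ ≥ 1`.  For `1 ≤ i ≤ m`, the `i`-th cyclic shift has all its
partial sums up to time `m-1` at least `1-ρ` if and only if `i` is the first time the partial
sums of `b` hit `I + p` for some `p ∈ {0,…,ρ-1}`, where `I` is the minimum of the partial sums.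
In particular exactly `ρ` of the `m` cyclic shifts are first-passage bridges. -/
theorem cyclic_lemma (m ρ : ℕ) (hm : 1 ≤ m) (hρ : 1 ≤ ρ) (b : ℕ → ℤ)
    (hb : ∀ j < m, -1 ≤ b j)
    (hsum : ∑ j ∈ Finset.range m, b j = -(ρ : ℤ)) :
    (∀ i, 1 ≤ i → i ≤ m →
      ((∀ k, 1 ≤ k → k ≤ m - 1 →
          (1 : ℤ) - ρ ≤ ∑ j ∈ Finset.range k, b ((i + j) % m)) ↔
        (∃ p : ℕ, p < ρ ∧
          (∑ j ∈ Finset.range i, b j) =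
            (Finset.Icc 1 m).inf' (Finset.nonempty_Icc.mpr hm)
              (fun ℓ => ∑ j ∈ Finset.range ℓ, b j) + p ∧
          ∀ k, 1 ≤ k → k ≤ m →
            (∑ j ∈ Finset.range k, b j) =
              (Finset.Icc 1 m).inf' (Finset.nonempty_Icc.mpr hm)
                (fun ℓ => ∑ j ∈ Finset.range ℓ, b j) + p → i ≤ k))) ∧
    ((Finset.Icc 1 m).filter (fun i => ∀ k, 1 ≤ k → k ≤ m - 1 →
        (1 : ℤ) - ρ ≤ ∑ j ∈ Finset.range k, b ((i + j) % m))).card = ρ := by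
  set I : ℤ := (Finset.Icc 1 m).inf' (Finset.nonempty_Icc.mpr hm)
      (fun ℓ => ∑ j ∈ Finset.range ℓ, b j) with hIdef
  have hIle : ∀ ℓ, 1 ≤ ℓ → ℓ ≤ m → I ≤ ∑ j ∈ Finset.range ℓ, b j := by
    intro ℓ h1 h2
    exact Finset.inf'_le _ (Finset.mem_Icc.mpr ⟨h1, h2⟩)
  obtain ⟨ℓ₀, hℓ₀mem, hℓ₀⟩ := Finset.exists_mem_eq_inf' (Finset.nonempty_Icc.mpr hm)
      (fun ℓ => ∑ j ∈ Finset.range ℓ, b j)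
  rw [Finset.mem_Icc] at hℓ₀mem
  have hℓ₀' : I = ∑ j ∈ Finset.range ℓ₀, b j := by rw [hIdef]; exact hℓ₀
  have hIneg : I ≤ -(ρ : ℤ) := by have := hIle m hm le_rfl; omega
  have ex : ∀ p : ℕ, p < ρ →
      ∃ k, 1 ≤ k ∧ k ≤ m ∧ (∑ j ∈ Finset.range k, b j) = I + p := by
    intro p hp
    obtain ⟨k, h1, h2, h3⟩ := cyclic_hit m b hb (I + p) (by omega) ℓ₀ hℓ₀mem.2 (by omega)
    exact ⟨k, h1, by omega, h3⟩
  have main : ∀ i, 1 ≤ i → i ≤ m →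
      ((∀ k, 1 ≤ k → k ≤ m - 1 →
          (1 : ℤ) - ρ ≤ ∑ j ∈ Finset.range k, b ((i + j) % m)) ↔
        (∃ p : ℕ, p < ρ ∧
          (∑ j ∈ Finset.range i, b j) = I + p ∧
          ∀ k, 1 ≤ k → k ≤ m →
            (∑ j ∈ Finset.range k, b j) = I + p → i ≤ k)) := by
    intro i hi1 hi2
    have kcond : (∀ k, 1 ≤ k → k ≤ m - 1 →
        (1 : ℤ) - ρ ≤ ∑ j ∈ Finset.range k, b ((i + j) % m)) ↔
        ((∀ ℓ, i < ℓ → ℓ ≤ m →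
            (∑ j ∈ Finset.range i, b j) + 1 - ρ ≤ ∑ j ∈ Finset.range ℓ, b j) ∧
         (∀ ℓ, 1 ≤ ℓ → ℓ < i →
            (∑ j ∈ Finset.range i, b j) + 1 ≤ ∑ j ∈ Finset.range ℓ, b j)) := by
      constructor
      · intro h
        constructor
        · intro ℓ hℓ1 hℓ2
          have hc := h (ℓ - i) (by omega) (by omega)
          rw [cyclic_sum_shift m b i hi1 hi2 (ℓ - i) (by omega),
            show i + (ℓ - i) = ℓ from by omega, if_pos hℓ2] at hc
          omega
        · intro ℓ hℓ1 hℓ2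
          have hc := h (m - i + ℓ) (by omega) (by omega)
          rw [cyclic_sum_shift m b i hi1 hi2 (m - i + ℓ) (by omega),
            show i + (m - i + ℓ) = m + ℓ from by omega,
            if_neg (by omega : ¬ m + ℓ ≤ m),
            show m + ℓ - m = ℓ from by omega] at hc
          omega
      · rintro ⟨hA, hB⟩ k hk1 hk2
        rw [cyclic_sum_shift m b i hi1 hi2 k (by omega)]
        by_cases h : i + k ≤ m
        · rw [if_pos h]
          have := hA (i + k) (by omega) h
          omega
        · rw [if_neg h]
          have := hB (i + k - m) (by omega) (by omega)
          omega
    rw [kcond]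
    constructor
    · rintro ⟨hA, hB⟩
      have hge : I ≤ ∑ j ∈ Finset.range i, b j := hIle i hi1 hi2
      have hub : (∑ j ∈ Finset.range i, b j) ≤ I + ρ - 1 := by
        rcases Nat.lt_trichotomy ℓ₀ i with h | h | h
        · have := hB ℓ₀ hℓ₀mem.1 h
          omega
        · subst h
          omega
        · have := hA ℓ₀ h hℓ₀mem.2
          omega
      refine ⟨((∑ j ∈ Finset.range i, b j) - I).toNat, by omega, by omega, ?_⟩
      intro k hk1 hk2 hkeq
      by_contra hcon
      have := hB k hk1 (by omega)
      omega
    · rintro ⟨p, hp, hSi, hmin⟩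
      constructor
      · intro ℓ hℓ1 hℓ2
        have := hIle ℓ (by omega) hℓ2
        omega
      · intro ℓ hℓ1 hℓ2
        by_contra hcon
        push_neg at hcon
        obtain ⟨k, hk1, hk2, hk3⟩ :=
          cyclic_hit m b hb (I + p) (by omega) ℓ (by omega) (by omega)
        have := hmin k hk1 (by omega) hk3
        omega
  refine ⟨main, ?_⟩
  conv_rhs => rw [← Finset.card_range ρ]
  symm
  apply Finset.card_bij (fun (p : ℕ) (hp : p ∈ Finset.range ρ) =>
    Nat.find (ex p (Finset.mem_range.mp hp)))
  · intro p hp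
    have hp' := Finset.mem_range.mp hp
    have hspec := Nat.find_spec (ex p hp')
    simp only [Finset.mem_filter, Finset.mem_Icc]
    refine ⟨⟨hspec.1, hspec.2.1⟩, ?_⟩
    exact (main _ hspec.1 hspec.2.1).mpr
      ⟨p, hp', hspec.2.2, fun k hk1 hk2 hkeq => Nat.find_min' _ ⟨hk1, hk2, hkeq⟩⟩
  · intro p1 hp1 p2 hp2 heq
    have e1 := (Nat.find_spec (ex p1 (Finset.mem_range.mp hp1))).2.2
    have e2 := (Nat.find_spec (ex p2 (Finset.mem_range.mp hp2))).2.2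
    rw [heq] at e1
    omega
  · intro a ha
    simp only [Finset.mem_filter, Finset.mem_Icc] at ha
    obtain ⟨⟨ha1, ha2⟩, hcond⟩ := ha
    obtain ⟨p, hp, hSa, hmin⟩ := (main a ha1 ha2).mp hcond
    refine ⟨p, Finset.mem_range.mpr hp, ?_⟩
    have hle : Nat.find (ex p hp) ≤ a := Nat.find_min' _ ⟨ha1, ha2, hSa⟩
    have hspec := Nat.find_spec (ex p hp)
    have hge := hmin _ hspec.1 hspec.2.1 hspec.2.2
    omega
end

section
/- Let T be a plane tree with Łukasiewicz path W (defined by W(0)=0 and W(j+1)=W(j)+k_{x_j}−1 where x_0<x_1<… are the vertices in lexicographic order and k_x is the number of children of x). Then for every vertex x ∈ T and all 1 ≤ j ≤ j' ≤ k_x: W(x k_x) = W(x), W(x j') = min over the lexicographic interval [x j, x j'] of W, and j' − j = W(x j) − W(x j'). -/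
/-- Number of children in `T` of the vertex `x` (vertices are finite sequences of integers,
the parent of a non-empty sequence is obtained by dropping its last entry). -/
def kch (T : Finset (List ℕ)) (x : List ℕ) : ℕ :=
  (T.filter (fun y => y ≠ [] ∧ y.dropLast = x)).card

/-- `T` is a plane tree: it contains the root `[]`, is stable under taking parents, and the
children of a vertex `x` with `kch T x` children are exactly `x ++ [i]` for `1 ≤ i ≤ kch T x`. -/
def IsPlaneTree (T : Finset (List ℕ)) : Prop :=
  [] ∈ T ∧ (∀ x ∈ T, x ≠ [] → x.dropLast ∈ T) ∧
    ∀ x ∈ T, ∀ i : ℕ, (x ++ [i] ∈ T ↔ 1 ≤ i ∧ i ≤ kch T x)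

/-- The Łukasiewicz path of `T`: `W 0 = 0` and `W (j+1) = W j + k_{x_j} - 1`, where
`x_0 < x_1 < ⋯` are the vertices of `T` in lexicographic order. -/
def lukW (T : Finset (List ℕ)) (m : ℕ) : ℤ :=
  ∑ i ∈ Finset.range m, ((kch T ((T.sort (· ≤ ·)).getD i []) : ℤ) - 1)

namespace LukAux

lemma beq_unify : (List.instBEq : BEq (List ℕ)) = instBEqOfDecidableEq :=
  lawful_beq_subsingleton _ _

lemma llt_iff {l l' : List ℕ} : l < l' ↔ List.Lex (· < ·) l l' := Iff.rfl

lemma append_lt_append_iff (p : List ℕ) {l1 l2 : List ℕ} : p ++ l1 < p ++ l2 ↔ l1 < l2 := by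
  rw [llt_iff, llt_iff]
  induction p with
  | nil => rfl
  | cons a p ih => simpa [List.lex_cons_iff] using ih

lemma prefix_le {p v : List ℕ} (h : p <+: v) : p ≤ v := by
  obtain ⟨r, rfl⟩ := h
  cases r with
  | nil => simp
  | cons a r =>
    refine le_of_lt ?_
    have : p ++ [] < p ++ (a :: r) := (append_lt_append_iff p).2 (llt_iff.2 List.Lex.nil)
    simpa using this

lemma cons_lt_singleton_iff {i b : ℕ} {r : List ℕ} : (i :: r : List ℕ) < [b] ↔ i < b := by
  rw [llt_iff]
  constructor
  · intro h
    cases h with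
    | cons h => exact absurd h List.not_lex_nil
    | rel h => exact h
  · exact fun h => List.Lex.rel h

lemma lt_append_singleton (x : List ℕ) (a : ℕ) : x < x ++ [a] := by
  refine lt_of_le_of_ne (prefix_le ⟨[a], rfl⟩) fun h => ?_
  simpa using congrArg List.length h

lemma append_singleton_le {x : List ℕ} {j i : ℕ} (h : j ≤ i) (r : List ℕ) :
    x ++ [j] ≤ x ++ i :: r := by
  rcases eq_or_lt_of_le h with rfl | h
  · exact prefix_le ⟨r, by simp⟩
  · exact le_of_lt ((append_lt_append_iff x).2 (llt_iff.2 (List.Lex.rel h)))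

lemma prefix_of_between {p : List ℕ} : ∀ {v : List ℕ} {b : ℕ}, p < v → v < p ++ [b] → p <+: v := by
  induction p with
  | nil => exact fun _ _ => List.nil_prefix
  | cons c p ih =>
    intro v b h1 h2
    rw [llt_iff] at h1 h2
    cases h1 with
    | cons h1' =>
      cases h2 with
      | cons h2' => exact List.cons_prefix_cons.2 ⟨rfl, ih (llt_iff.2 h1') (llt_iff.2 h2')⟩
      | rel h => exact absurd h (lt_irrefl _)
    | rel h1' =>
      cases h2 with
      | cons h2' => exact absurd h1' (lt_irrefl _)
      | rel h => exact absurd (h1'.trans h) (lt_irrefl _)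

lemma prefix_mem {T : Finset (List ℕ)} (hT : IsPlaneTree T) :
    ∀ (n : ℕ) (v : List ℕ), v.length ≤ n → v ∈ T → ∀ p, p <+: v → p ∈ T := by
  intro n
  induction n with
  | zero =>
    intro v hlen hv p hp
    have hveq : v = [] := List.eq_nil_of_length_eq_zero (Nat.le_zero.1 hlen)
    subst hveq
    rw [List.prefix_nil] at hp
    subst hp; exact hv
  | succ n ih =>
    intro v hlen hv p hp
    by_cases hpv : p = v
    · subst hpv; exact hv
    · have hvne : v ≠ [] := by
        rintro rfl
        rw [List.prefix_nil] at hp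
        exact hpv hp
      have hd : v.dropLast ∈ T := hT.2.1 v hv hvne
      obtain ⟨r, rfl⟩ := hp
      have hr : r ≠ [] := by rintro rfl; simp at hpv
      have hp' : p <+: (p ++ r).dropLast := by
        rw [List.dropLast_append_of_ne_nil hr]
        exact List.prefix_append _ _
      refine ih (p ++ r).dropLast ?_ hd p hp'
      rw [List.length_dropLast]
      have hlen' : (p ++ r).length ≤ n + 1 := hlen
      have hrl : 1 ≤ r.length := List.length_pos_iff.2 hr
      simp only [List.length_append] at hlen' ⊢
      omega

/-- Descendants (including itself) of `c` in `T`. -/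
def desc (T : Finset (List ℕ)) (c : List ℕ) : Finset (List ℕ) :=
  T.filter (fun u => c <+: u)

lemma mem_desc {T : Finset (List ℕ)} {c u : List ℕ} : u ∈ desc T c ↔ u ∈ T ∧ c <+: u :=
  Finset.mem_filter

lemma self_mem_desc {T : Finset (List ℕ)} {c : List ℕ} (hc : c ∈ T) : c ∈ desc T c :=
  mem_desc.2 ⟨hc, List.prefix_refl c⟩

lemma desc_disj {T : Finset (List ℕ)} {x : List ℕ} {i i' : ℕ} (h : i ≠ i') :
    Disjoint (desc T (x ++ [i])) (desc T (x ++ [i'])) := by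
  rw [Finset.disjoint_left]
  intro u hu hu'
  have h1 := (mem_desc.1 hu).2
  have h2 := (mem_desc.1 hu').2
  rcases List.prefix_or_prefix_of_prefix h1 h2 with hh | hh
  · have := hh.eq_of_length (by simp)
    simp only [List.append_cancel_left_eq, List.cons.injEq] at this
    exact h this.1
  · have := hh.eq_of_length (by simp)
    simp only [List.append_cancel_left_eq, List.cons.injEq] at this
    exact h this.1.symm

lemma desc_split {T : Finset (List ℕ)} (hT : IsPlaneTree T) {c : List ℕ} (hc : c ∈ T) :
    desc T c = insert c ((Finset.Icc 1 (kch T c)).biUnion (fun i => desc T (c ++ [i]))) := by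
  ext u
  simp only [Finset.mem_insert, Finset.mem_biUnion, mem_desc, Finset.mem_Icc]
  constructor
  · rintro ⟨hu, hpre⟩
    by_cases h : u = c
    · exact Or.inl h
    · right
      obtain ⟨r, rfl⟩ := hpre
      have hr : r ≠ [] := by rintro rfl; simp at h
      obtain ⟨i, r', rfl⟩ := List.exists_cons_of_ne_nil hr
      have hpre2 : c ++ [i] <+: c ++ i :: r' := ⟨r', by simp⟩
      have hci : c ++ [i] ∈ T :=
        prefix_mem hT (c ++ i :: r').length _ le_rfl hu _ hpre2
      have hik := (hT.2.2 c hc i).1 hci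
      exact ⟨i, hik, hu, hpre2⟩
  · rintro (rfl | ⟨i, _, hu, hpre⟩)
    · exact ⟨hc, List.prefix_refl _⟩
    · exact ⟨hu, (List.prefix_append c [i]).trans hpre⟩

lemma desc_sum {T : Finset (List ℕ)} (hT : IsPlaneTree T) :
    ∀ (N : ℕ) (c : List ℕ), c ∈ T → (desc T c).card ≤ N →
      (∑ u ∈ desc T c, ((kch T u : ℤ) - 1) = -1) ∧
      ∀ v : List ℕ, (∑ u ∈ desc T c, (if v ≤ u then (kch T u : ℤ) - 1 else 0)) ≤ 0 := by
  intro N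
  induction N with
  | zero =>
    intro c hc hcard
    have := Finset.card_pos.2 ⟨c, self_mem_desc hc⟩
    omega
  | succ N ih =>
    intro c hc hcard
    have hsplit := desc_split hT hc
    have hnot : c ∉ (Finset.Icc 1 (kch T c)).biUnion (fun i => desc T (c ++ [i])) := by
      simp only [Finset.mem_biUnion, mem_desc, not_exists]
      rintro i ⟨_, _, hpre⟩
      have := hpre.length_le
      simp at this
    have hdisj : (↑(Finset.Icc 1 (kch T c)) : Set ℕ).PairwiseDisjoint
        (fun i => desc T (c ++ [i])) := fun i _ i' _ hne => desc_disj hne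
    have hmem : ∀ i ∈ Finset.Icc 1 (kch T c), c ++ [i] ∈ T := by
      intro i hi
      rw [Finset.mem_Icc] at hi
      exact (hT.2.2 c hc i).2 hi
    have hcard' : ∀ i ∈ Finset.Icc 1 (kch T c), (desc T (c ++ [i])).card ≤ N := by
      intro i hi
      have hsubset : desc T (c ++ [i]) ⊆ (desc T c).erase c := by
        intro u hu
        rw [Finset.mem_erase]
        obtain ⟨huT, hpre⟩ := mem_desc.1 hu
        refine ⟨fun h => ?_, mem_desc.2 ⟨huT, (List.prefix_append c [i]).trans hpre⟩⟩
        subst h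
        have := hpre.length_le
        simp at this
      have h1 := Finset.card_le_card hsubset
      rw [Finset.card_erase_of_mem (self_mem_desc hc)] at h1
      omega
    have hQ : ∑ u ∈ desc T c, ((kch T u : ℤ) - 1) = -1 := by
      rw [hsplit, Finset.sum_insert hnot, Finset.sum_biUnion hdisj]
      have hconst : ∀ i ∈ Finset.Icc 1 (kch T c),
          ∑ u ∈ desc T (c ++ [i]), ((kch T u : ℤ) - 1) = -1 :=
        fun i hi => (ih _ (hmem i hi) (hcard' i hi)).1
      rw [Finset.sum_congr rfl hconst, Finset.sum_const, Nat.card_Icc, nsmul_eq_mul]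
      push_cast
      ring
    refine ⟨hQ, fun v => ?_⟩
    by_cases hvc : v ≤ c
    · have heq : ∀ u ∈ desc T c, (if v ≤ u then (kch T u : ℤ) - 1 else 0)
          = (kch T u : ℤ) - 1 := by
        intro u hu
        rw [if_pos (hvc.trans (prefix_le (mem_desc.1 hu).2))]
      rw [Finset.sum_congr rfl heq, hQ]
      norm_num
    · rw [hsplit, Finset.sum_insert hnot, Finset.sum_biUnion hdisj, if_neg hvc, zero_add]
      exact Finset.sum_nonpos fun i hi => (ih _ (hmem i hi) (hcard' i hi)).2 v

/-- Sum of `k_u - 1` over vertices strictly before `w`. -/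
def gsum (T : Finset (List ℕ)) (w : List ℕ) : ℤ :=
  ∑ u ∈ T.filter (fun u => u < w), ((kch T u : ℤ) - 1)

lemma indexOf_lt_indexOf {s : List (List ℕ)} (hsort : s.Pairwise (· < ·)) {u w : List ℕ}
    (hu : u ∈ s) (hw : w ∈ s) (h : u < w) :
    @List.idxOf (List ℕ) instBEqOfDecidableEq u s
      < @List.idxOf (List ℕ) instBEqOfDecidableEq w s := by
  by_contra hcon
  push_neg at hcon
  have hu' : @List.idxOf (List ℕ) instBEqOfDecidableEq u s < s.length :=
    (@List.idxOf_lt_length_iff _ instBEqOfDecidableEq _ _ _).2 hu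
  have hw' : @List.idxOf (List ℕ) instBEqOfDecidableEq w s < s.length :=
    (@List.idxOf_lt_length_iff _ instBEqOfDecidableEq _ _ _).2 hw
  have hmono := hsort.sortedLT.strictMono_get.monotone
    (show (⟨@List.idxOf (List ℕ) instBEqOfDecidableEq w s, hw'⟩ : Fin s.length)
      ≤ ⟨@List.idxOf (List ℕ) instBEqOfDecidableEq u s, hu'⟩ from hcon)
  rw [@List.idxOf_get _ instBEqOfDecidableEq _ _ _, @List.idxOf_get _ instBEqOfDecidableEq _ _ _] at hmono
  exact absurd h (not_lt.2 hmono)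

lemma lukW_indexOf (T : Finset (List ℕ)) (w : List ℕ) (hw : w ∈ T) :
    lukW T (@List.idxOf (List ℕ) instBEqOfDecidableEq w (T.sort (· ≤ ·))) = gsum T w := by
  have hsort : (T.sort (· ≤ ·)).Pairwise (· < ·) := T.sortedLT_sort.pairwise
  have hnd : (T.sort (· ≤ ·)).Nodup := T.sort_nodup _
  have hwmem : w ∈ T.sort (· ≤ ·) := (Finset.mem_sort _).2 hw
  have hlt : @List.idxOf (List ℕ) instBEqOfDecidableEq w (T.sort (· ≤ ·))
      < (T.sort (· ≤ ·)).length :=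
    (@List.idxOf_lt_length_iff _ instBEqOfDecidableEq _ _ _).2 hwmem
  rw [lukW, gsum]
  refine Finset.sum_nbij' (i := fun i => (T.sort (· ≤ ·)).getD i [])
    (j := fun u => @List.idxOf (List ℕ) instBEqOfDecidableEq u (T.sort (· ≤ ·))) ?_ ?_ ?_ ?_ ?_
  · intro a ha
    rw [Finset.mem_range] at ha
    have halen : a < (T.sort (· ≤ ·)).length := ha.trans hlt
    rw [List.getD_eq_getElem _ _ halen, Finset.mem_filter]
    refine ⟨(Finset.mem_sort _).1 (List.getElem_mem halen), ?_⟩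
    have h2 := hsort.sortedLT.strictMono_get
      (show (⟨a, halen⟩ : Fin _) < ⟨@List.idxOf (List ℕ) instBEqOfDecidableEq w (T.sort (· ≤ ·)), hlt⟩ from ha)
    rw [@List.idxOf_get _ instBEqOfDecidableEq _ _ _] at h2
    exact h2
  · intro u hu
    rw [Finset.mem_filter] at hu
    rw [Finset.mem_range]
    exact indexOf_lt_indexOf hsort ((Finset.mem_sort _).2 hu.1) hwmem hu.2
  · intro a ha
    rw [Finset.mem_range] at ha
    have halen : a < (T.sort (· ≤ ·)).length := ha.trans hlt
    rw [List.getD_eq_getElem _ _ halen]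
    exact @List.get_idxOf _ instBEqOfDecidableEq _ _ hnd ⟨a, halen⟩
  · intro u hu
    rw [Finset.mem_filter] at hu
    have hum : u ∈ T.sort (· ≤ ·) := (Finset.mem_sort _).2 hu.1
    have hul : @List.idxOf (List ℕ) instBEqOfDecidableEq u (T.sort (· ≤ ·))
        < (T.sort (· ≤ ·)).length :=
      (@List.idxOf_lt_length_iff _ instBEqOfDecidableEq _ _ _).2 hum
    rw [List.getD_eq_getElem _ _ hul]
    exact @List.idxOf_get _ instBEqOfDecidableEq _ _ _ hul
  · intro a _
    rfl

lemma gsum_diff (T : Finset (List ℕ)) {v w : List ℕ} (h : v ≤ w) :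
    gsum T w = gsum T v
      + ∑ u ∈ T.filter (fun u => v ≤ u ∧ u < w), ((kch T u : ℤ) - 1) := by
  rw [gsum, gsum,
    ← Finset.sum_filter_add_sum_filter_not (T.filter (fun u => u < w)) (fun u => u < v)]
  congr 1
  · apply Finset.sum_congr _ fun _ _ => rfl
    ext u
    simp only [Finset.mem_filter]
    constructor
    · rintro ⟨⟨hu, _⟩, h2⟩; exact ⟨hu, h2⟩
    · rintro ⟨hu, h2⟩; exact ⟨⟨hu, lt_of_lt_of_le h2 h⟩, h2⟩
  · apply Finset.sum_congr _ fun _ _ => rfl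
    ext u
    simp only [Finset.mem_filter, not_lt]
    constructor
    · rintro ⟨⟨hu, h2⟩, h3⟩; exact ⟨hu, h3, h2⟩
    · rintro ⟨hu, h3, h2⟩; exact ⟨⟨hu, h2⟩, h3⟩

lemma between_eq_biUnion {T : Finset (List ℕ)} (hT : IsPlaneTree T) {x : List ℕ}
    {j j' : ℕ} :
    T.filter (fun u => x ++ [j] ≤ u ∧ u < x ++ [j'])
      = (Finset.Ico j j').biUnion (fun i => desc T (x ++ [i])) := by
  ext u
  simp only [Finset.mem_filter, Finset.mem_biUnion, Finset.mem_Ico, mem_desc]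
  constructor
  · rintro ⟨hu, h1, h2⟩
    have hxu : x < u := lt_of_lt_of_le (lt_append_singleton x j) h1
    have hpre : x <+: u := prefix_of_between hxu h2
    obtain ⟨r, rfl⟩ := hpre
    have hr : r ≠ [] := by rintro rfl; rw [List.append_nil] at hxu; exact lt_irrefl _ hxu
    obtain ⟨i, r', rfl⟩ := List.exists_cons_of_ne_nil hr
    refine ⟨i, ⟨?_, ?_⟩, hu, ⟨r', by simp⟩⟩
    · by_contra hcon
      push_neg at hcon
      have : x ++ (i :: r') < x ++ [j] :=
        (append_lt_append_iff x).2 (cons_lt_singleton_iff.2 hcon)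
      exact absurd h1 (not_le.2 this)
    · exact cons_lt_singleton_iff.1 ((append_lt_append_iff x).1 h2)
  · rintro ⟨i, ⟨hji, hij'⟩, hu, hpre⟩
    obtain ⟨r, rfl⟩ := hpre
    refine ⟨hu, ?_, ?_⟩
    · have heq : x ++ [i] ++ r = x ++ (i :: r) := by simp
      rw [heq]
      exact append_singleton_le hji r
    · rw [List.append_assoc]
      exact (append_lt_append_iff x).2 (cons_lt_singleton_iff.2 hij')

lemma part1_filter {T : Finset (List ℕ)} (hT : IsPlaneTree T) {x : List ℕ} (hx : x ∈ T) :
    T.filter (fun u => x ≤ u ∧ u < x ++ [kch T x])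
      = insert x (T.filter (fun u => x ++ [1] ≤ u ∧ u < x ++ [kch T x])) := by
  ext u
  simp only [Finset.mem_filter, Finset.mem_insert]
  constructor
  · rintro ⟨hu, h1, h2⟩
    by_cases h : u = x
    · exact Or.inl h
    · right
      have hxu : x < u := lt_of_le_of_ne h1 (Ne.symm h)
      have hpre : x <+: u := prefix_of_between hxu h2
      obtain ⟨r, rfl⟩ := hpre
      have hr : r ≠ [] := by rintro rfl; simp at h
      obtain ⟨i, r', rfl⟩ := List.exists_cons_of_ne_nil hr
      have hpre2 : x ++ [i] <+: x ++ i :: r' := ⟨r', by simp⟩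
      have hci : x ++ [i] ∈ T :=
        prefix_mem hT (x ++ i :: r').length _ le_rfl hu _ hpre2
      have hi1 : 1 ≤ i := ((hT.2.2 x hx i).1 hci).1
      exact ⟨hu, append_singleton_le hi1 r', h2⟩
  · rintro (h | ⟨hu, h1, h2⟩)
    · subst h
      exact ⟨hx, le_refl _, lt_append_singleton _ _⟩
    · exact ⟨hu, (prefix_le ⟨[1], rfl⟩).trans h1, h2⟩

end LukAux

open LukAux in
/-- For a plane tree `T` with Łukasiewicz path `W`, identifying a vertex with its lexicographic
index, for every vertex `x` and all `1 ≤ j ≤ j' ≤ k_x` one has `W (x k_x) = W x`,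
`W (x j')` is the minimum of `W` over the lexicographic interval `[x j, x j']`, and
`j' - j = W (x j) - W (x j')`. -/
theorem lukasiewicz_path_children (T : Finset (List ℕ)) (hT : IsPlaneTree T)
    (x : List ℕ) (hx : x ∈ T) (j j' : ℕ) (h1 : 1 ≤ j) (h2 : j ≤ j') (h3 : j' ≤ kch T x) :
    lukW T ((T.sort (· ≤ ·)).idxOf (x ++ [kch T x]))
        = lukW T ((T.sort (· ≤ ·)).idxOf x) ∧
    lukW T ((T.sort (· ≤ ·)).idxOf (x ++ [j']))
        = sInf (lukW T '' Set.Icc ((T.sort (· ≤ ·)).idxOf (x ++ [j]))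
            ((T.sort (· ≤ ·)).idxOf (x ++ [j']))) ∧
    ((j' : ℤ) - j) = lukW T ((T.sort (· ≤ ·)).idxOf (x ++ [j]))
        - lukW T ((T.sort (· ≤ ·)).idxOf (x ++ [j'])) := by
  have hk1 : 1 ≤ kch T x := le_trans (le_trans h1 h2) h3
  have hmemc : ∀ i, 1 ≤ i → i ≤ kch T x → x ++ [i] ∈ T :=
    fun i hi1 hi2 => (hT.2.2 x hx i).2 ⟨hi1, hi2⟩
  have hxj : x ++ [j] ∈ T := hmemc j h1 (h2.trans h3)
  have hxj' : x ++ [j'] ∈ T := hmemc j' (h1.trans h2) h3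
  have hxk : x ++ [kch T x] ∈ T := hmemc _ hk1 le_rfl
  have hQ : ∀ c ∈ T, ∑ u ∈ desc T c, ((kch T u : ℤ) - 1) = -1 :=
    fun c hc => (desc_sum hT _ c hc le_rfl).1
  have hP : ∀ c ∈ T, ∀ v, ∑ u ∈ desc T c, (if v ≤ u then (kch T u : ℤ) - 1 else 0) ≤ 0 :=
    fun c hc v => (desc_sum hT _ c hc le_rfl).2 v
  have hbetween : ∀ a b : ℕ, 1 ≤ a → a ≤ b → b ≤ kch T x →
      ∑ u ∈ T.filter (fun u => x ++ [a] ≤ u ∧ u < x ++ [b]), ((kch T u : ℤ) - 1)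
        = (a : ℤ) - b := by
    intro a b ha hab hbk
    have hconst : ∀ i ∈ Finset.Ico a b,
        ∑ u ∈ desc T (x ++ [i]), ((kch T u : ℤ) - 1) = -1 := by
      intro i hi
      rw [Finset.mem_Ico] at hi
      exact hQ _ (hmemc i (ha.trans hi.1) (hi.2.le.trans hbk))
    rw [between_eq_biUnion hT, Finset.sum_biUnion (fun i _ i' _ hne => desc_disj hne),
      Finset.sum_congr rfl hconst, Finset.sum_const, Nat.card_Ico, nsmul_eq_mul]
    push_cast [hab]
    ring
  have hsort : (T.sort (· ≤ ·)).Pairwise (· < ·) := T.sortedLT_sort.pairwise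
  have hnd : (T.sort (· ≤ ·)).Nodup := T.sort_nodup _
  have hle_jj' : (x ++ [j] : List ℕ) ≤ x ++ [j'] := append_singleton_le h2 []
  rw [beq_unify]
  rw [lukW_indexOf T _ hxk, lukW_indexOf T x hx, lukW_indexOf T _ hxj,
    lukW_indexOf T _ hxj']
  refine ⟨?_, ?_, ?_⟩
  · -- part 1
    have hd := gsum_diff T (prefix_le (⟨[kch T x], rfl⟩ : x <+: x ++ [kch T x]))
    have hxnotin : x ∉ T.filter (fun u => x ++ [1] ≤ u ∧ u < x ++ [kch T x]) := by
      rw [Finset.mem_filter]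
      rintro ⟨_, hle, _⟩
      exact absurd hle (not_le.2 (lt_append_singleton x 1))
    have hsum0 : ∑ u ∈ T.filter (fun u => x ≤ u ∧ u < x ++ [kch T x]),
        ((kch T u : ℤ) - 1) = 0 := by
      rw [part1_filter hT hx, Finset.sum_insert hxnotin,
        hbetween 1 (kch T x) le_rfl hk1 le_rfl]
      push_cast
      ring
    rw [hd, hsum0, add_zero]
  · -- part 2
    set a := @List.idxOf (List ℕ) instBEqOfDecidableEq (x ++ [j]) (T.sort (· ≤ ·))
      with ha_def
    set b := @List.idxOf (List ℕ) instBEqOfDecidableEq (x ++ [j']) (T.sort (· ≤ ·))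
      with hb_def
    have hjmem : x ++ [j] ∈ T.sort (· ≤ ·) := (Finset.mem_sort _).2 hxj
    have hj'mem : x ++ [j'] ∈ T.sort (· ≤ ·) := (Finset.mem_sort _).2 hxj'
    have halen : a < (T.sort (· ≤ ·)).length := (@List.idxOf_lt_length_iff _ instBEqOfDecidableEq _ _ _).2 hjmem
    have hblen : b < (T.sort (· ≤ ·)).length := (@List.idxOf_lt_length_iff _ instBEqOfDecidableEq _ _ _).2 hj'mem
    have hab : a ≤ b := by
      rcases eq_or_lt_of_le hle_jj' with heq | hlt
      · rw [ha_def, hb_def, heq]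
      · exact (indexOf_lt_indexOf hsort hjmem hj'mem hlt).le
    have hWb : lukW T b = gsum T (x ++ [j']) := lukW_indexOf T _ hxj'
    have hbmem : gsum T (x ++ [j']) ∈ lukW T '' Set.Icc a b :=
      ⟨b, ⟨hab, le_rfl⟩, hWb⟩
    have hlb : ∀ y ∈ lukW T '' Set.Icc a b, gsum T (x ++ [j']) ≤ y := by
      rintro y ⟨m, ⟨ham, hmb⟩, rfl⟩
      have hmlen : m < (T.sort (· ≤ ·)).length := lt_of_le_of_lt hmb hblen
      set v := (T.sort (· ≤ ·)).get ⟨m, hmlen⟩ with hv_def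
      have hvT : v ∈ T := (Finset.mem_sort _).1 (List.get_mem _ _)
      have hmidx : @List.idxOf (List ℕ) instBEqOfDecidableEq v (T.sort (· ≤ ·)) = m :=
        @List.get_idxOf _ instBEqOfDecidableEq _ _ hnd _
      have hlw : lukW T m = gsum T v := by
        rw [← hmidx]; exact lukW_indexOf T v hvT
      rw [hlw]
      have h1v : x ++ [j] ≤ v := by
        have hm := hsort.sortedLT.strictMono_get.monotone
          (show (⟨a, halen⟩ : Fin _) ≤ ⟨m, hmlen⟩ from ham)
        rwa [@List.idxOf_get _ instBEqOfDecidableEq _ _ _] at hm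
      have h2v : v ≤ x ++ [j'] := by
        have hm := hsort.sortedLT.strictMono_get.monotone
          (show (⟨m, hmlen⟩ : Fin _) ≤ ⟨b, hblen⟩ from hmb)
        rwa [@List.idxOf_get _ instBEqOfDecidableEq _ _ _] at hm
      have hdv := gsum_diff T h2v
      have hset : T.filter (fun u => v ≤ u ∧ u < x ++ [j'])
          = (T.filter (fun u => x ++ [j] ≤ u ∧ u < x ++ [j'])).filter (fun u => v ≤ u) := by
        ext u
        simp only [Finset.mem_filter]
        constructor
        · rintro ⟨hu, hh1, hh2⟩; exact ⟨⟨hu, h1v.trans hh1, hh2⟩, hh1⟩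
        · rintro ⟨⟨hu, _, hh2⟩, hh1⟩; exact ⟨hu, hh1, hh2⟩
      have hkey : ∑ u ∈ T.filter (fun u => v ≤ u ∧ u < x ++ [j']),
          ((kch T u : ℤ) - 1) ≤ 0 := by
        rw [hset, Finset.sum_filter, between_eq_biUnion hT,
          Finset.sum_biUnion (fun i _ i' _ hne => desc_disj hne)]
        refine Finset.sum_nonpos fun i hi => ?_
        rw [Finset.mem_Ico] at hi
        exact hP _ (hmemc i (h1.trans hi.1) (hi.2.le.trans h3)) v
      linarith [hdv, hkey]
    refine le_antisymm (le_csInf ⟨_, hbmem⟩ hlb) (csInf_le ⟨_, hlb⟩ hbmem)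
  · -- part 3
    have hdiff3 := gsum_diff T hle_jj'
    rw [hbetween j j' h1 h2 h3] at hdiff3
    linarith [hdiff3]
end

section
/- For a plane tree T with Łukasiewicz path W, for every vertex x, the number R(x) of vertices y > x (in lexicographic order) whose parent is a strict ancestor of x equals W(x). -/
/- Auxiliary lemmas about the lexicographic order on `List ℕ`. -/

lemma prefix_lt_of_ne {p q : List ℕ} (h : p <+: q) (hne : p ≠ q) : p < q := by
  obtain ⟨t, rfl⟩ := h
  cases t with
  | nil => simp at hne
  | cons a t =>
    clear hne
    show List.Lex (· < ·) p (p ++ a :: t)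
    induction p with
    | nil => exact List.Lex.nil
    | cons b p ih => exact List.Lex.cons ih

lemma ext_lt {u x y : List ℕ} (h : u < x) (h1 : ¬ u <+: x) (h2 : u <+: y) : y < x := by
  have h' : List.Lex (· < ·) u x := h
  clear h
  induction h' generalizing y with
  | nil => exact absurd (List.nil_prefix) h1
  | @cons a l1 l2 _ ih =>
    obtain ⟨t, rfl⟩ := h2
    have : List.Lex (· < ·) (l1 ++ t) l2 :=
      ih (fun hp => h1 (List.cons_prefix_cons.mpr ⟨rfl, hp⟩)) ⟨t, rfl⟩
    exact List.Lex.cons this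
  | @rel l1 a l2 b hab =>
    obtain ⟨t, rfl⟩ := h2
    exact List.Lex.rel hab

lemma nil_lt_iff {x : List ℕ} : [] < x ↔ x ≠ [] := by
  constructor
  · intro h hx
    subst hx
    exact List.not_lt_nil _ h
  · intro h
    cases x with
    | nil => exact absurd rfl h
    | cons a t => exact List.nil_lt_cons a t

lemma dropLast_lt {z : List ℕ} (hz : z ≠ []) : z.dropLast < z := by
  refine prefix_lt_of_ne (List.dropLast_prefix z) (fun h => ?_)
  have := congrArg List.length h
  rw [List.length_dropLast] at this
  have hlen : 0 < z.length := List.length_pos_iff.mpr hz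
  omega

lemma beq_congr {α : Type*} (i1 i2 : BEq α) (h1 : @LawfulBEq α i1) (h2 : @LawfulBEq α i2)
    (a b : α) : @BEq.beq α i1 a b = @BEq.beq α i2 a b := by
  rw [Bool.eq_iff_iff]
  rw [@beq_iff_eq α i1 h1, @beq_iff_eq α i2 h2]

lemma indexOf_congr {α : Type*} (i1 i2 : BEq α) (h1 : @LawfulBEq α i1) (h2 : @LawfulBEq α i2)
    (x : α) : ∀ l : List α, @List.idxOf α i1 x l = @List.idxOf α i2 x l := by
  intro l
  induction l with
  | nil => rfl
  | cons a t ih =>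
    rw [@List.idxOf_cons α a t x i1, @List.idxOf_cons α a t x i2,
      beq_congr i1 i2 h1 h2, ih]

lemma sum_range_getD (l : List (List ℕ)) (f : List ℕ → ℤ) :
    ∀ m, m ≤ l.length →
      ∑ i ∈ Finset.range m, f (l.getD i []) = ((l.take m).map f).sum := by
  intro m
  induction m with
  | zero => simp
  | succ n ih =>
    intro h
    have hn : n < l.length := h
    rw [Finset.sum_range_succ, ih (le_of_lt hn), List.getD_eq_getElem l [] hn, List.take_succ,
      List.map_append, List.sum_append, List.getElem?_eq_getElem hn]
    simp

/-- In a plane tree `T` with Łukasiewicz path `W`, for every vertex `x`, the number `R x` of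
vertices `y > x` (in lexicographic order) whose parent is a strict ancestor of `x`
(that is, `y.dropLast` is a proper prefix of `x`) equals `W x`, where `W x` denotes the value
of `W` at the lexicographic index of `x`. -/
theorem lukasiewicz_path_right_count (T : Finset (List ℕ)) (hT : IsPlaneTree T)
    (x : List ℕ) (hx : x ∈ T) :
    ((T.filter (fun y => x < y ∧ y.dropLast ≠ x ∧ y.dropLast <+: x)).card : ℤ)
      = lukW T ((T.sort (· ≤ ·)).idxOf x) := by
  obtain ⟨hroot, hparent, _⟩ := hT
  set l := T.sort (· ≤ ·) with hl
  set idx := l.idxOf x with hidx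
  have hxl : x ∈ l := (Finset.mem_sort _).mpr hx
  have hidx' : idx = @List.idxOf _ List.instBEq x l := by
    rw [hidx]
  have hlen : idx < l.length := by
    rw [hidx']; exact List.idxOf_lt_length_iff.mpr hxl
  have hlen' : @List.idxOf _ List.instBEq x l < l.length := hidx' ▸ hlen
  have hx_get : l[idx] = x := by
    simp only [hidx']; exact List.getElem_idxOf hlen'
  have hsorted : l.Pairwise (· < ·) := (Finset.sortedLT_sort T).pairwise
  have hpair := List.pairwise_iff_getElem.mp hsorted
  -- membership in the initial segment
  have hmemtake : ∀ z, z ∈ l.take idx ↔ z ∈ T ∧ z < x := by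
    intro z
    constructor
    · intro hz
      obtain ⟨i, hi, rfl⟩ := List.mem_take_iff_getElem.mp hz
      have hi1 : i < idx := lt_of_lt_of_le hi (min_le_left _ _)
      have hi2 : i < l.length := lt_of_lt_of_le hi (min_le_right _ _)
      refine ⟨(Finset.mem_sort _).mp (List.getElem_mem _), ?_⟩
      have := hpair i idx hi2 hlen hi1
      rwa [hx_get] at this
    · rintro ⟨hzT, hzx⟩
      have hzl : z ∈ l := (Finset.mem_sort _).mpr hzT
      obtain ⟨j, hj, rfl⟩ := List.mem_iff_getElem.mp hzl
      have hj' : j < idx := by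
        by_contra hle
        push_neg at hle
        rcases eq_or_lt_of_le hle with h | h
        · subst h
          rw [hx_get] at hzx; exact lt_irrefl x hzx
        · have := hpair idx j hlen hj h
          rw [hx_get] at this
          exact lt_irrefl x (this.trans hzx)
      exact List.mem_take_iff_getElem.mpr ⟨j, lt_min hj' hj, rfl⟩
  set S := T.filter (fun z => z < x) with hS
  have hnodtake : (l.take idx).Nodup := (List.take_sublist _ _).nodup (T.sort_nodup _)
  have htakeFinset : (l.take idx).toFinset = S := by
    ext z
    simp only [List.mem_toFinset, hmemtake, hS, Finset.mem_filter]
  have hcardS : S.card = idx := by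
    rw [← htakeFinset, List.toFinset_card_of_nodup hnodtake,
      List.length_take]
    exact min_eq_left (le_of_lt hlen)
  -- rewrite lukW as a sum over S
  have hluk : lukW T idx = (∑ z ∈ S, (kch T z : ℤ)) - S.card := by
    have hsg := sum_range_getD l (fun z => (kch T z : ℤ) - 1) idx (le_of_lt hlen)
    rw [lukW, ← hl, hsg, ← List.sum_toFinset _ hnodtake,
      htakeFinset, Finset.sum_sub_distrib]
    simp
  set s := T.filter (fun y => y ≠ [] ∧ y.dropLast < x) with hs
  -- the sum of the numbers of children over S is the cardinality of s
  have hsum_kch : ∑ z ∈ S, kch T z = s.card := by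
    rw [Finset.card_eq_sum_card_fiberwise (f := fun y => y.dropLast) (t := S)
      (fun y hy => by
        simp only [hs, Finset.mem_filter] at hy
        simp only [hS, Finset.mem_filter]
        exact (let hy' := Finset.mem_filter.mp (show y ∈ s from hy)
          Finset.mem_filter.mpr ⟨hparent y hy'.1 hy'.2.1, hy'.2.2⟩ : y.dropLast ∈ S))]
    refine Finset.sum_congr rfl (fun b hb => ?_)
    simp only [hS, Finset.mem_filter] at hb
    rw [kch]
    congr 1
    ext y
    simp only [hs, Finset.mem_filter, and_assoc]
    constructor
    · rintro ⟨hyT, hy0, hdb⟩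
      exact ⟨hyT, hy0, lt_of_eq_of_lt hdb hb.2, hdb⟩
    · rintro ⟨hyT, hy0, -, hdb⟩
      exact ⟨hyT, hy0, hdb⟩
  set Rset := T.filter (fun y => x < y ∧ y.dropLast ≠ x ∧ y.dropLast <+: x) with hR
  by_cases hxnil : x = []
  · subst hxnil
    have hS0 : S = ∅ := by
      ext z
      simp only [hS, Finset.mem_filter, Finset.notMem_empty, iff_false, not_and]
      intro _ h
      exact List.not_lt_nil _ h
    have hidx0 : idx = 0 := by rw [← hcardS, hS0, Finset.card_empty]
    have hR0 : Rset = ∅ := by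
      ext y
      simp only [hR, Finset.mem_filter, Finset.notMem_empty, iff_false]
      rintro ⟨-, -, hne, hp⟩
      exact hne (List.prefix_nil.mp hp)
    rw [hidx0, hR0, lukW]
    simp
  -- x is not the root
  · have hsplit := Finset.card_filter_add_card_filter_not
      (s := s) (p := fun y => y < x)
    set A := s.filter (fun y => y < x) with hA
    set B := s.filter (fun y => ¬ y < x) with hB
    have hAcard : A.card + 1 = S.card := by
      have hA' : A = S.erase [] := by
        ext z
        simp only [hA, hs, hS, Finset.mem_filter, Finset.mem_erase, and_assoc]
        constructor
        · rintro ⟨hzT, hz0, _, hzx⟩; exact ⟨hz0, hzT, hzx⟩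
        · rintro ⟨hz0, hzT, hzx⟩
          exact ⟨hzT, hz0, (dropLast_lt hz0).trans hzx, hzx⟩
      rw [hA']
      exact Finset.card_erase_add_one (by
        simp only [hS, Finset.mem_filter]
        exact ⟨hroot, nil_lt_iff.mpr hxnil⟩)
    have hBcard : B.card = Rset.card + 1 := by
      have hB' : B = insert x Rset := by
        ext y
        simp only [hB, hs, hR, Finset.mem_filter, Finset.mem_insert, and_assoc]
        constructor
        · rintro ⟨hyT, hy0, hdy, hnyx⟩
          rcases lt_trichotomy y x with h | h | h
          · exact absurd h hnyx
          · exact Or.inl h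
          · refine Or.inr ⟨hyT, h, fun hd => lt_irrefl x (hd ▸ hdy), ?_⟩
            by_contra hnp
            exact absurd (ext_lt hdy hnp (List.dropLast_prefix y)) (asymm h)
        · rintro (rfl | ⟨hyT, hxy, hdne, hdp⟩)
          · exact ⟨hx, hxnil, dropLast_lt hxnil, lt_irrefl y⟩
          · refine ⟨hyT, ?_, prefix_lt_of_ne hdp hdne, asymm hxy⟩
            rintro rfl
            exact List.not_lt_nil _ hxy
      have hxnotR : x ∉ Rset := by
        rw [hR, Finset.mem_filter]
        rintro ⟨-, h, -⟩
        exact lt_irrefl x h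
      rw [hB', Finset.card_insert_of_notMem hxnotR]
    -- put everything together
    rw [hluk, ← Nat.cast_sum, hsum_kch, ← hsplit, hBcard, ← hAcard]
    push_cast
    ring
end

section
/- Let X_1, …, X_h be obtained by sampling without replacement from a finite population of non-negative reals, and let X*_1, …, X*_h be an i.i.d. sample (with replacement) from the same population. Then for every convex function f: E[f(X_1 + ⋯ + X_h)] ≤ E[f(X*_1 + ⋯ + X*_h)]. -/
open Finset

-- Lemma B: sum over permutations of c (τ x) is independent of x; value (h-1)! * ∑ c
lemma perm_sum_apply_mul {h : ℕ} (c : Fin h → ℝ) (x : Fin h) :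
    (h : ℝ) * ∑ τ : Equiv.Perm (Fin h), c (τ x) = (Nat.factorial h : ℝ) * ∑ j, c j := by
  have const : ∀ y : Fin h, ∑ τ : Equiv.Perm (Fin h), c (τ y)
      = ∑ τ : Equiv.Perm (Fin h), c (τ x) := by
    intro y
    have := Equiv.sum_comp (Equiv.mulRight (Equiv.swap x y)) (fun τ => c (τ y))
    simp only [Equiv.coe_mulRight, Equiv.Perm.mul_apply] at this
    rw [← this]
    refine Finset.sum_congr rfl fun τ _ => ?_
    rw [Equiv.swap_apply_right]
  have tot : ∑ y : Fin h, ∑ τ : Equiv.Perm (Fin h), c (τ y)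
      = (Nat.factorial h : ℝ) * ∑ j, c j := by
    rw [Finset.sum_comm]
    rw [Finset.sum_congr rfl fun τ _ => Equiv.sum_comp τ c]
    rw [Finset.sum_const, Finset.card_univ, Fintype.card_perm, Fintype.card_fin,
      nsmul_eq_mul]
  calc (h : ℝ) * ∑ τ : Equiv.Perm (Fin h), c (τ x)
      = ∑ y : Fin h, ∑ τ : Equiv.Perm (Fin h), c (τ y) := by
        rw [Finset.sum_congr rfl fun y _ => const y, Finset.sum_const, Finset.card_univ,
          Fintype.card_fin, nsmul_eq_mul]
    _ = _ := tot

lemma perm_sum_apply {h : ℕ} (hpos : 0 < h) (c : Fin h → ℝ) (x : Fin h) :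
    ∑ τ : Equiv.Perm (Fin h), c (τ x) = ((h - 1).factorial : ℝ) * ∑ j, c j := by
  have hne : (h : ℝ) ≠ 0 := by positivity
  have := perm_sum_apply_mul c x
  have hfac : (Nat.factorial h : ℝ) = (h : ℝ) * ((h - 1).factorial : ℝ) := by
    rw [← Nat.cast_mul, Nat.mul_factorial_pred hpos.ne']
  rw [hfac, mul_assoc] at this
  exact mul_left_cancel₀ hne this

-- existence of a permutation mapping a small finset into the image of an embedding
lemma exists_perm_mapsTo {α : Type*} [Fintype α] [DecidableEq α] {V W : Finset α}
    (hcard : V.card ≤ W.card) : ∃ χ : Equiv.Perm α, ∀ x ∈ V, χ x ∈ W := by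
  classical
  obtain ⟨V', hV'W, hV'card⟩ := Finset.exists_subset_card_eq hcard
  have e : {x // x ∈ V} ≃ {x // x ∈ V'} := Finset.equivOfCardEq hV'card.symm
  have fcard : Fintype.card {x // ¬ x ∈ V} = Fintype.card {x // ¬ x ∈ V'} := by
    rw [Fintype.card_subtype_compl, Fintype.card_subtype_compl]
    congr 1
    rw [Fintype.card_coe, Fintype.card_coe, hV'card]
  refine ⟨Equiv.subtypeCongr e (Fintype.equivOfCardEq fcard), fun x hx => ?_⟩
  have : Equiv.subtypeCongr e (Fintype.equivOfCardEq fcard) x = (e ⟨x, hx⟩ : α) := by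
    simp [Equiv.subtypeCongr, hx]
  rw [this]
  exact hV'W (e ⟨x, hx⟩).2

lemma star_lemma (n h : ℕ) (hh : h ≤ n) (hpos : 0 < h) (a : Fin n → ℝ)
    (f : ℝ → ℝ) (hf : ConvexOn ℝ Set.univ f) (g : Fin h → Fin n) :
    ∑ π : Equiv.Perm (Fin n), f (∑ i : Fin h, a (π (Fin.castLE hh i)))
      ≤ ∑ π : Equiv.Perm (Fin n), f (∑ i : Fin h, a (π (g i))) := by
  classical
  set emb : Fin h ↪ Fin n := Fin.castLEEmb hh with hemb
  -- find a permutation χ sending the image of g into the first h slots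
  obtain ⟨χ, hχ⟩ : ∃ χ : Equiv.Perm (Fin n),
      ∀ x ∈ Finset.image g Finset.univ, χ x ∈ Finset.map emb Finset.univ := by
    apply exists_perm_mapsTo
    rw [Finset.card_map, Finset.card_univ, Fintype.card_fin]
    exact (Finset.card_image_le).trans (by simp)
  have hrep : ∀ i : Fin h, ∃ j : Fin h, emb j = χ (g i) := by
    intro i
    have := hχ (g i) (Finset.mem_image_of_mem g (Finset.mem_univ i))
    rcases Finset.mem_map.1 this with ⟨j, _, hj⟩
    exact ⟨j, hj⟩
  choose j hj using hrep
  set P : Equiv.Perm (Fin n) → Equiv.Perm (Fin h) → ℝ :=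
    fun ρ τ => ∑ i : Fin h, a (ρ (emb (τ (j i)))) with hP
  have claim1 : ∀ ρ : Equiv.Perm (Fin n),
      ∑ τ : Equiv.Perm (Fin h), P ρ τ
        = (Nat.factorial h : ℝ) * ∑ i : Fin h, a (ρ (Fin.castLE hh i)) := by
    intro ρ
    rw [hP]
    rw [Finset.sum_comm]
    have : ∀ i : Fin h, ∑ τ : Equiv.Perm (Fin h), a (ρ (emb (τ (j i))))
        = ((h - 1).factorial : ℝ) * ∑ j' : Fin h, a (ρ (emb j')) :=
      fun i => perm_sum_apply hpos (fun j' => a (ρ (emb j'))) (j i)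
    rw [Finset.sum_congr rfl fun i _ => this i, Finset.sum_const, Finset.card_univ,
      Fintype.card_fin, nsmul_eq_mul, ← mul_assoc, ← Nat.cast_mul,
      Nat.mul_factorial_pred hpos.ne']
    rfl
  have hfacpos : (0:ℝ) < (Nat.factorial h : ℝ) := by positivity
  have claim2 : ∀ ρ : Equiv.Perm (Fin n),
      f (∑ i : Fin h, a (ρ (Fin.castLE hh i)))
        ≤ (∑ τ : Equiv.Perm (Fin h), f (P ρ τ)) / (Nat.factorial h : ℝ) := by
    intro ρ
    have hw : ∑ _τ : Equiv.Perm (Fin h), ((Nat.factorial h : ℝ))⁻¹ = 1 := by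
      rw [Finset.sum_const, Finset.card_univ, Fintype.card_perm, Fintype.card_fin,
        nsmul_eq_mul]
      field_simp
    have := hf.map_sum_le (t := Finset.univ) (w := fun _ => ((Nat.factorial h : ℝ))⁻¹)
      (p := P ρ) (fun _ _ => by positivity) hw (fun _ _ => Set.mem_univ _)
    have hcenter : ∑ τ : Equiv.Perm (Fin h), ((Nat.factorial h : ℝ))⁻¹ • P ρ τ
        = ∑ i : Fin h, a (ρ (Fin.castLE hh i)) := by
      rw [← Finset.smul_sum, claim1, smul_eq_mul, ← mul_assoc, inv_mul_cancel₀ hfacpos.ne',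
        one_mul]
    rw [hcenter] at this
    refine this.trans (le_of_eq ?_)
    rw [Finset.sum_div]
    refine Finset.sum_congr rfl fun τ _ => ?_
    rw [smul_eq_mul, div_eq_inv_mul]
  have claim3 : ∀ τ : Equiv.Perm (Fin h),
      ∑ ρ : Equiv.Perm (Fin n), f (P ρ τ)
        = ∑ ρ : Equiv.Perm (Fin n), f (∑ i : Fin h, a (ρ (g i))) := by
    intro τ
    set s : Equiv.Perm (Fin n) := (τ.viaEmbedding emb) * χ with hs
    have := Equiv.sum_comp (Equiv.mulRight s)
      (fun ρ : Equiv.Perm (Fin n) => f (∑ i : Fin h, a (ρ (g i))))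
    rw [← this]
    refine Finset.sum_congr rfl fun ρ _ => ?_
    simp only [Equiv.coe_mulRight]
    congr 1
    refine Finset.sum_congr rfl fun i _ => ?_
    congr 1
    show ρ (emb (τ (j i))) = (ρ * s) (g i)
    rw [hs]
    simp only [Equiv.Perm.mul_apply]
    rw [← hj i, Equiv.Perm.viaEmbedding_apply]
  calc ∑ π : Equiv.Perm (Fin n), f (∑ i : Fin h, a (π (Fin.castLE hh i)))
      ≤ ∑ π : Equiv.Perm (Fin n),
          (∑ τ : Equiv.Perm (Fin h), f (P π τ)) / (Nat.factorial h : ℝ) :=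
        Finset.sum_le_sum fun π _ => claim2 π
    _ = (∑ τ : Equiv.Perm (Fin h), ∑ π : Equiv.Perm (Fin n), f (P π τ))
          / (Nat.factorial h : ℝ) := by rw [← Finset.sum_div, Finset.sum_comm]
    _ = (∑ _τ : Equiv.Perm (Fin h),
          ∑ π : Equiv.Perm (Fin n), f (∑ i : Fin h, a (π (g i))))
          / (Nat.factorial h : ℝ) := by
        rw [Finset.sum_congr rfl fun τ _ => claim3 τ]
    _ = ∑ π : Equiv.Perm (Fin n), f (∑ i : Fin h, a (π (g i))) := by
        rw [Finset.sum_const, Finset.card_univ, Fintype.card_perm, Fintype.card_fin,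
          nsmul_eq_mul]
        field_simp


/-- Hoeffding's comparison: if `X_1, …, X_h` are sampled without replacement from a finite
population `a : Fin n → ℝ` of non-negative reals (uniform random injection, modelled by a
uniform permutation) and `X*_1, …, X*_h` are i.i.d. uniform samples from the same population,
then for every convex `f`, `E[f(X_1 + ⋯ + X_h)] ≤ E[f(X*_1 + ⋯ + X*_h)]`. -/
theorem sampling_without_replacement_convex_order (n h : ℕ) (hn : 1 ≤ n) (hh : h ≤ n)
    (a : Fin n → ℝ) (ha : ∀ i, 0 ≤ a i)
    (f : ℝ → ℝ) (hf : ConvexOn ℝ Set.univ f) :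
    (∑ π : Equiv.Perm (Fin n), f (∑ i : Fin h, a (π (Fin.castLE hh i)))) / (Nat.factorial n)
      ≤ (∑ g : Fin h → Fin n, f (∑ i : Fin h, a (g i))) / ((n : ℝ) ^ h) := by
  classical
  have hNpos : (0:ℝ) < (Nat.factorial n : ℝ) := by positivity
  have hnpos : (0:ℝ) < (n : ℝ) ^ h := by
    have : (0:ℝ) < (n:ℝ) := by exact_mod_cast hn
    positivity
  rcases Nat.eq_zero_or_pos h with rfl | hpos
  · -- h = 0
    simp only [Finset.univ_eq_empty, Finset.sum_empty, pow_zero, div_one, Finset.sum_const,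
      Finset.card_univ, Fintype.card_perm, Fintype.card_fin, nsmul_eq_mul]
    have hc : (Fintype.card (Fin 0 → Fin n)) = 1 := by simp
    rw [hc, mul_comm, mul_div_assoc, div_self hNpos.ne']
    simp
  · -- main case
    rw [div_le_div_iff₀ hNpos hnpos]
    have key : ∀ g : Fin h → Fin n,
        ∑ π : Equiv.Perm (Fin n), f (∑ i : Fin h, a (π (Fin.castLE hh i)))
          ≤ ∑ π : Equiv.Perm (Fin n), f (∑ i : Fin h, a (π (g i))) :=
      fun g => star_lemma n h hh hpos a f hf g
    have step1 : ((n:ℝ) ^ h) * ∑ π : Equiv.Perm (Fin n), f (∑ i : Fin h, a (π (Fin.castLE hh i)))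
        ≤ ∑ g : Fin h → Fin n, ∑ π : Equiv.Perm (Fin n), f (∑ i : Fin h, a (π (g i))) := by
      have hcard : (Fintype.card (Fin h → Fin n) : ℝ) = (n:ℝ) ^ h := by
        rw [Fintype.card_fun]; push_cast; simp
      calc ((n:ℝ) ^ h) * ∑ π : Equiv.Perm (Fin n), f (∑ i : Fin h, a (π (Fin.castLE hh i)))
          = ∑ _g : Fin h → Fin n,
              ∑ π : Equiv.Perm (Fin n), f (∑ i : Fin h, a (π (Fin.castLE hh i))) := by
            rw [Finset.sum_const, Finset.card_univ, nsmul_eq_mul, hcard]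
        _ ≤ _ := Finset.sum_le_sum fun g _ => key g
    have step2 : ∑ g : Fin h → Fin n, ∑ π : Equiv.Perm (Fin n), f (∑ i : Fin h, a (π (g i)))
        = (Nat.factorial n : ℝ) * ∑ g : Fin h → Fin n, f (∑ i : Fin h, a (g i)) := by
      rw [Finset.sum_comm]
      have : ∀ π : Equiv.Perm (Fin n),
          ∑ g : Fin h → Fin n, f (∑ i : Fin h, a (π (g i)))
            = ∑ g : Fin h → Fin n, f (∑ i : Fin h, a (g i)) := by
        intro π
        have := Equiv.sum_comp (Equiv.arrowCongr (Equiv.refl (Fin h)) π)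
          (fun g : Fin h → Fin n => f (∑ i : Fin h, a (g i)))
        rw [← this]
        refine Finset.sum_congr rfl fun g _ => ?_
        simp [Equiv.arrowCongr_apply, Function.comp]
      rw [Finset.sum_congr rfl fun π _ => this π, Finset.sum_const, Finset.card_univ,
        Fintype.card_perm, Fintype.card_fin, nsmul_eq_mul]
    calc (∑ π : Equiv.Perm (Fin n), f (∑ i : Fin h, a (π (Fin.castLE hh i)))) * ((n:ℝ) ^ h)
        = ((n:ℝ) ^ h) * ∑ π : Equiv.Perm (Fin n), f (∑ i : Fin h, a (π (Fin.castLE hh i))) := by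
          ring
      _ ≤ ∑ g : Fin h → Fin n, ∑ π : Equiv.Perm (Fin n), f (∑ i : Fin h, a (π (g i))) := step1
      _ = (Nat.factorial n : ℝ) * ∑ g : Fin h → Fin n, f (∑ i : Fin h, a (g i)) := step2
      _ = (∑ g : Fin h → Fin n, f (∑ i : Fin h, a (g i))) * (Nat.factorial n : ℝ) := by ring
end
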